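/- arXiv:1206.5739 — 2 statements merged into one kernel-verified Lean document; each statement's English description precedes it below -/
import Mathlib

section
/- Let a ∈ ℝ, b ∈ ℂ^n, C ∈ ℂ^{n×n} Hermitian, and let X = [[a, -b*], [b, C]], H = diag(-1, I_n), and Q(z) = a − z + b*(C − z)^{-1} b. Then for every z ∈ ℂ with Im z ≠ 0 at which Q(z) ≠ 0 and z is not an eigenvalue of X: −1/Q(z) = e* H (X − z)^{-1} e, where e is the first standard basis vector of ℂ^{n+1}. -/
open Matrix

private lemma stmt_5_aux_det (n : ℕ) (C : Matrix (Fin n) (Fin n) ℂ) (hC : C.IsHermitian) (z : ℂ)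
    (hz : z.im ≠ 0) : IsUnit (C - z • 1).det := by
  by_contra h
  rw [isUnit_iff_ne_zero, not_not] at h
  obtain ⟨v, hv, hmv⟩ := (Matrix.exists_mulVec_eq_zero_iff).mpr h
  have hCv : C *ᵥ v = z • v := by
    have h2 : C *ᵥ v - z • v = 0 := by
      simpa [sub_mulVec, smul_mulVec] using hmv
    exact sub_eq_zero.mp h2
  set r : ℝ := ∑ i, Complex.normSq (v i) with hr
  have htre : star v ⬝ᵥ v = (r : ℂ) := by
    simp [hr, dotProduct, Complex.normSq_eq_conj_mul_self]
  have hherm : star (star v ⬝ᵥ C *ᵥ v) = star v ᵥ* C ⬝ᵥ v := by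
    rw [star_dotProduct, star_star, star_mulVec, hC.eq]
  rw [← dotProduct_mulVec] at hherm
  have hts : star v ⬝ᵥ C *ᵥ v = z * r := by
    rw [hCv, dotProduct_smul, smul_eq_mul, htre]
  rw [hts, star_mul', Complex.star_def, Complex.conj_ofReal] at hherm
  have him : z.im * r = 0 := by
    have := congrArg Complex.im hherm
    simp [Complex.mul_im] at this
    linarith
  have hr0 : r = 0 := by
    rcases mul_eq_zero.mp him with h' | h'
    · exact absurd h' hz
    · exact h'
  apply hv
  funext i
  have hle : ∀ i ∈ Finset.univ, 0 ≤ Complex.normSq (v i) := fun i _ => Complex.normSq_nonneg _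
  have := (Finset.sum_eq_zero_iff_of_nonneg hle).mp hr0 i (Finset.mem_univ i)
  simpa using Complex.normSq_eq_zero.mp this

private lemma stmt_5_aux_inv (n : ℕ) (a : ℝ) (b : Fin n → ℂ) (C : Matrix (Fin n) (Fin n) ℂ) (z : ℂ)
    (hD : IsUnit (C - z • 1).det)
    (X : Matrix (Unit ⊕ Fin n) (Unit ⊕ Fin n) ℂ)
    (hX : X = Matrix.fromBlocks (Matrix.of fun _ _ => (a : ℂ))
        (Matrix.of fun _ j => -(starRingEnd ℂ) (b j)) (Matrix.of fun i _ => b i) C)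
    (hev : (X - z • (1 : Matrix (Unit ⊕ Fin n) (Unit ⊕ Fin n) ℂ)).det ≠ 0)
    (hQ : (a : ℂ) - z + dotProduct (star b)
        ((C - z • (1 : Matrix (Fin n) (Fin n) ℂ))⁻¹.mulVec b) ≠ 0) :
    (X - z • (1 : Matrix (Unit ⊕ Fin n) (Unit ⊕ Fin n) ℂ))⁻¹ (Sum.inl ()) (Sum.inl ()) =
      ((a : ℂ) - z + dotProduct (star b)
        ((C - z • (1 : Matrix (Fin n) (Fin n) ℂ))⁻¹.mulVec b))⁻¹ := by
  set D : Matrix (Fin n) (Fin n) ℂ := C - z • 1 with hDdef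
  set Q : ℂ := (a : ℂ) - z + star b ⬝ᵥ (D⁻¹ *ᵥ b) with hQdef
  set A' : Matrix Unit Unit ℂ := of fun _ _ => (a : ℂ) - z with hA'
  set B' : Matrix Unit (Fin n) ℂ := of fun _ j => -(starRingEnd ℂ) (b j) with hB'
  set C' : Matrix (Fin n) Unit ℂ := of fun i _ => b i with hC'
  have hM : X - z • (1 : Matrix (Unit ⊕ Fin n) (Unit ⊕ Fin n) ℂ) = fromBlocks A' B' C' D := by
    subst hX
    ext (i | i) (j | j) <;>
      simp [hA', hB', hC', hDdef, Matrix.one_apply, Sum.inl.injEq, Matrix.sub_apply]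
  letI : Invertible D := invertibleOfIsUnitDet _ hD
  letI iM : Invertible (X - z • (1 : Matrix (Unit ⊕ Fin n) (Unit ⊕ Fin n) ℂ)) :=
    invertibleOfIsUnitDet _ (isUnit_iff_ne_zero.mpr hev)
  letI iM' : Invertible (fromBlocks A' B' C' D) := hM ▸ iM
  have hS : A' - B' * ⅟D * C' = of fun _ _ => Q := by
    rw [invOf_eq_nonsing_inv]
    ext i j
    simp [hA', hB', hC', hQdef, mul_apply, dotProduct, mulVec, Finset.sum_mul, Finset.mul_sum]
    rw [Finset.sum_comm]
    simp [mul_assoc]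
  letI iS : Invertible (A' - B' * ⅟D * C') := by
    rw [hS]
    refine invertibleOfIsUnitDet _ ?_
    rw [Matrix.det_unique]
    exact isUnit_iff_ne_zero.mpr hQ
  have hSinv : ⅟(A' - B' * ⅟D * C') = of fun _ _ => Q⁻¹ := by
    apply invOf_eq_right_inv
    rw [hS]
    ext i j
    simp [mul_apply, Matrix.one_apply, mul_inv_cancel₀ hQ]
  have h1 : (X - z • (1 : Matrix (Unit ⊕ Fin n) (Unit ⊕ Fin n) ℂ))⁻¹ = ⅟(fromBlocks A' B' C' D) := by
    rw [hM, ← invOf_eq_nonsing_inv]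
  rw [h1, invOf_fromBlocks₂₂_eq, fromBlocks_apply₁₁, hSinv]
  rfl

/-- Schur complement formula: `-1/Q(z) = e* H (X - z)⁻¹ e` for the H-selfadjoint block matrix
`X = [[a, -b*],[b, C]]`, `H = diag(-1, I_n)`, `Q(z) = a - z + b*(C - z)⁻¹ b`. -/
theorem stmt_5 (n : ℕ) (a : ℝ) (b : Fin n → ℂ) (C : Matrix (Fin n) (Fin n) ℂ)
    (hC : C.IsHermitian)
    (X : Matrix (Unit ⊕ Fin n) (Unit ⊕ Fin n) ℂ)
    (hX : X = Matrix.fromBlocks (Matrix.of fun _ _ => (a : ℂ))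
        (Matrix.of fun _ j => -(starRingEnd ℂ) (b j)) (Matrix.of fun i _ => b i) C)
    (H : Matrix (Unit ⊕ Fin n) (Unit ⊕ Fin n) ℂ)
    (hH : H = Matrix.fromBlocks (-1) 0 0 (1 : Matrix (Fin n) (Fin n) ℂ))
    (e : Unit ⊕ Fin n → ℂ) (he : e = Pi.single (Sum.inl ()) 1)
    (z : ℂ) (hz : z.im ≠ 0)
    (hQ : (a : ℂ) - z + dotProduct (star b)
        ((C - z • (1 : Matrix (Fin n) (Fin n) ℂ))⁻¹.mulVec b) ≠ 0)
    (hev : (X - z • (1 : Matrix (Unit ⊕ Fin n) (Unit ⊕ Fin n) ℂ)).det ≠ 0) :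
    -1 / ((a : ℂ) - z + dotProduct (star b)
        ((C - z • (1 : Matrix (Fin n) (Fin n) ℂ))⁻¹.mulVec b)) =
      dotProduct (star e)
        ((H * (X - z • (1 : Matrix (Unit ⊕ Fin n) (Unit ⊕ Fin n) ℂ))⁻¹).mulVec e) := by
  have hinv := stmt_5_aux_inv n a b C z (stmt_5_aux_det n C hC z hz) X hX hev hQ
  set M : Matrix (Unit ⊕ Fin n) (Unit ⊕ Fin n) ℂ :=
    X - z • (1 : Matrix (Unit ⊕ Fin n) (Unit ⊕ Fin n) ℂ) with hMdef
  have hRHS : dotProduct (star e) ((H * M⁻¹).mulVec e)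
      = (H * M⁻¹) (Sum.inl ()) (Sum.inl ()) := by
    subst he
    simp [dotProduct, Matrix.mulVec, Pi.single_apply, apply_ite, mul_comm]
  have hHM : (H * M⁻¹) (Sum.inl ()) (Sum.inl ()) = -(M⁻¹ (Sum.inl ()) (Sum.inl ())) := by
    subst hH
    simp [mul_apply, Fintype.sum_sum_type, fromBlocks_apply₁₁, fromBlocks_apply₁₂,
      Matrix.one_apply]
  rw [hRHS, hHM, hinv, neg_div, one_div]
end

section
/- Let Q(z) = a − z + μ̂(z) where a ∈ ℝ and μ is a finite positive Borel measure on ℝ, and suppose z_0 ∈ ℂ⁺ satisfies Q(z_0) = 0. Then z̄_0 satisfies Q(z̄_0) = 0 as well, where Q is extended to the lower half-plane by Q(z̄) = conj(Q(z)). Moreover there is at most one zero of Q in the open upper half-plane, counted with multiplicity, and if such a zero exists it is simple. -/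
open MeasureTheory Complex

lemma aux_sub_ne (z : ℂ) (hz : z.im ≠ 0) (t : ℝ) : (t : ℂ) - z ≠ 0 := by
  intro h
  apply hz
  have := congrArg Complex.im h
  simpa using this.symm

lemma aux_norm_ge (z : ℂ) (t : ℝ) : |z.im| ≤ ‖(t : ℂ) - z‖ := by
  have h := Complex.abs_im_le_norm ((t : ℂ) - z)
  simpa using h

lemma aux_integrable_bdd {E : Type*} [NormedAddCommGroup E] (μ : Measure ℝ) [IsFiniteMeasure μ]
    (f : ℝ → E) (hf : Continuous f) (C : ℝ) (h : ∀ t, ‖f t‖ ≤ C) : Integrable f μ :=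
  Integrable.mono' (integrable_const C) hf.aestronglyMeasurable (Filter.Eventually.of_forall h)

lemma aux_cont_inv (z : ℂ) (hz : z.im ≠ 0) :
    Continuous fun t : ℝ => ((t : ℂ) - z)⁻¹ :=
  (Complex.continuous_ofReal.sub continuous_const).inv₀ (aux_sub_ne z hz)

lemma aux_integrable_inv (μ : Measure ℝ) [IsFiniteMeasure μ] (z : ℂ) (hz : z.im ≠ 0) :
    Integrable (fun t : ℝ => ((t : ℂ) - z)⁻¹) μ := by
  refine aux_integrable_bdd μ _ (aux_cont_inv z hz) |z.im|⁻¹ fun t => ?_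
  rw [norm_inv]
  exact inv_anti₀ (abs_pos.2 hz) (aux_norm_ge z t)

lemma aux_integrable_prod_inv (μ : Measure ℝ) [IsFiniteMeasure μ] (z w : ℂ)
    (hz : z.im ≠ 0) (hw : w.im ≠ 0) :
    Integrable (fun t : ℝ => (((t : ℂ) - z) * ((t : ℂ) - w))⁻¹) μ := by
  refine aux_integrable_bdd μ _ ?_ (|z.im|⁻¹ * |w.im|⁻¹) fun t => ?_
  · exact ((Complex.continuous_ofReal.sub continuous_const).mul
      (Complex.continuous_ofReal.sub continuous_const)).inv₀ fun t =>
        mul_ne_zero (aux_sub_ne z hz t) (aux_sub_ne w hw t)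
  · rw [norm_inv, norm_mul, mul_inv]
    exact mul_le_mul (inv_anti₀ (abs_pos.2 hz) (aux_norm_ge z t))
      (inv_anti₀ (abs_pos.2 hw) (aux_norm_ge w t))
      (inv_nonneg.2 (norm_nonneg _)) (inv_nonneg.2 (abs_nonneg _))

lemma aux_integrable_normSq_inv (μ : Measure ℝ) [IsFiniteMeasure μ] (z : ℂ) (hz : z.im ≠ 0) :
    Integrable (fun t : ℝ => (normSq ((t : ℂ) - z))⁻¹) μ := by
  refine aux_integrable_bdd μ _ ?_ (z.im ^ 2)⁻¹ fun t => ?_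
  · exact (Complex.continuous_normSq.comp
      (Complex.continuous_ofReal.sub continuous_const)).inv₀ fun t =>
        normSq_pos.2 (aux_sub_ne z hz t) |>.ne'
  · have h1 : z.im ^ 2 ≤ normSq ((t : ℂ) - z) := by
      have := aux_norm_ge z t
      calc z.im ^ 2 = |z.im| ^ 2 := (_root_.sq_abs _).symm
        _ ≤ ‖(t : ℂ) - z‖ ^ 2 := by
          have := aux_norm_ge z t
          exact pow_le_pow_left₀ (abs_nonneg _) this 2
        _ = normSq ((t : ℂ) - z) := by
          rw [Complex.sq_norm]
    have h2 : (0:ℝ) < z.im ^ 2 := by positivity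
    rw [Real.norm_eq_abs, _root_.abs_of_nonneg (inv_nonneg.2 (normSq_nonneg _))]
    exact inv_anti₀ h2 h1

lemma aux_im_inv (z : ℂ) (t : ℝ) :
    (((t : ℂ) - z)⁻¹).im = z.im * (normSq ((t : ℂ) - z))⁻¹ := by
  rw [Complex.inv_im]
  simp [div_eq_mul_inv]

lemma aux_normSq_one (a : ℝ) (μ : Measure ℝ) [IsFiniteMeasure μ] (z : ℂ) (hz : z.im ≠ 0)
    (h : (a : ℂ) - z + ∫ t : ℝ, ((t : ℂ) - z)⁻¹ ∂μ = 0) :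
    ∫ t : ℝ, (normSq ((t : ℂ) - z))⁻¹ ∂μ = 1 := by
  have him := congrArg Complex.im h
  rw [Complex.add_im, Complex.sub_im, Complex.ofReal_im,
    show (∫ t : ℝ, ((t : ℂ) - z)⁻¹ ∂μ).im = ∫ t : ℝ, (((t : ℂ) - z)⁻¹).im ∂μ from
      (integral_im (aux_integrable_inv μ z hz)).symm] at him
  simp only [aux_im_inv, Complex.zero_im, zero_sub] at him
  rw [integral_const_mul] at him
  have : z.im * (∫ t : ℝ, (normSq ((t : ℂ) - z))⁻¹ ∂μ - 1) = 0 := by ring_nf; linarith [him]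
  rcases mul_eq_zero.1 this with h' | h'
  · exact absurd h' hz
  · linarith

lemma aux_mu_zero (μ : Measure ℝ) [IsFiniteMeasure μ] (f : ℝ → ℝ) (hf : Integrable f μ)
    (hpos : ∀ t, 0 < f t) (h : ∫ t, f t ∂μ = 0) : μ = 0 := by
  have h0 : f =ᵐ[μ] 0 :=
    (integral_eq_zero_iff_of_nonneg (fun t => (hpos t).le) hf).mp h
  have : ∀ᵐ t ∂μ, False := h0.mono fun t ht => (hpos t).ne' ht
  rw [Filter.eventually_false_iff_eq_bot, ae_eq_bot] at this
  exact Measure.measure_univ_eq_zero.mp (by simpa using this)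

lemma aux_diff_one (a : ℝ) (μ : Measure ℝ) [IsFiniteMeasure μ] (z w : ℂ)
    (hz : z.im ≠ 0) (hw : w.im ≠ 0) (hzw : z ≠ w)
    (h1 : (a : ℂ) - z + ∫ t : ℝ, ((t : ℂ) - z)⁻¹ ∂μ = 0)
    (h2 : (a : ℂ) - w + ∫ t : ℝ, ((t : ℂ) - w)⁻¹ ∂μ = 0) :
    ∫ t : ℝ, (((t : ℂ) - z) * ((t : ℂ) - w))⁻¹ ∂μ = 1 := by
  have key : ∀ t : ℝ, ((t : ℂ) - z)⁻¹ - ((t : ℂ) - w)⁻¹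
      = (z - w) * (((t : ℂ) - z) * ((t : ℂ) - w))⁻¹ := by
    intro t
    have hzt := aux_sub_ne z hz t
    have hwt := aux_sub_ne w hw t
    field_simp
    ring
  have hsub : (w - z) + ∫ t : ℝ, (((t : ℂ) - z)⁻¹ - ((t : ℂ) - w)⁻¹) ∂μ = 0 := by
    have := congrArg₂ (· - ·) h1 h2
    simp only [sub_zero] at this
    rw [integral_sub (aux_integrable_inv μ z hz) (aux_integrable_inv μ w hw)]
    rw [← this]; ring
  rw [show (fun t : ℝ => ((t : ℂ) - z)⁻¹ - ((t : ℂ) - w)⁻¹)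
      = fun t : ℝ => (z - w) * (((t : ℂ) - z) * ((t : ℂ) - w))⁻¹ from funext key,
    integral_const_mul] at hsub
  have hzw' : z - w ≠ 0 := sub_ne_zero.2 hzw
  have : (z - w) * ((∫ t : ℝ, (((t : ℂ) - z) * ((t : ℂ) - w))⁻¹ ∂μ) - 1) = 0 := by
    rw [mul_sub, mul_one, ← hsub]; ring
  rcases mul_eq_zero.1 this with h' | h'
  · exact absurd h' hzw'
  · linear_combination h'

lemma aux_conj_sub (z : ℂ) (t : ℝ) :
    (t : ℂ) - (starRingEnd ℂ) z = (starRingEnd ℂ) ((t : ℂ) - z) := by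
  simp [map_sub, Complex.conj_ofReal]

lemma aux_contra (a : ℝ) (μ : Measure ℝ) [IsFiniteMeasure μ] (z₀ : ℂ) (hz₀ : 0 < z₀.im)
    (hzero : (a : ℂ) - z₀ + ∫ t : ℝ, ((t : ℂ) - z₀)⁻¹ ∂μ = 0) (hμ : μ = 0) : False := by
  rw [hμ, integral_zero_measure, add_zero, sub_eq_zero] at hzero
  have := congrArg Complex.im hzero
  simp at this
  exact absurd this.symm hz₀.ne'

lemma aux_unique (a : ℝ) (μ : Measure ℝ) [IsFiniteMeasure μ] (z₀ : ℂ) (hz₀ : 0 < z₀.im)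
    (hzero : (a : ℂ) - z₀ + ∫ t : ℝ, ((t : ℂ) - z₀)⁻¹ ∂μ = 0)
    (z : ℂ) (hz : 0 < z.im)
    (hzQ : (a : ℂ) - z + ∫ t : ℝ, ((t : ℂ) - z)⁻¹ ∂μ = 0) (hne : z ≠ z₀) : False := by
  have I1 : ∫ t : ℝ, (normSq ((t : ℂ) - z))⁻¹ ∂μ = 1 := aux_normSq_one a μ z hz.ne' hzQ
  have I0 : ∫ t : ℝ, (normSq ((t : ℂ) - z₀))⁻¹ ∂μ = 1 := aux_normSq_one a μ z₀ hz₀.ne' hzero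
  have IP : ∫ t : ℝ, (((t : ℂ) - z) * ((t : ℂ) - z₀))⁻¹ ∂μ = 1 :=
    aux_diff_one a μ z z₀ hz.ne' hz₀.ne' hne hzQ hzero
  have hPint : Integrable (fun t : ℝ => (((t : ℂ) - z) * ((t : ℂ) - z₀))⁻¹) μ :=
    aux_integrable_prod_inv μ z z₀ hz.ne' hz₀.ne'
  have IPre : ∫ t : ℝ, ((((t : ℂ) - z) * ((t : ℂ) - z₀))⁻¹).re ∂μ = 1 := by
    rw [show (∫ t : ℝ, ((((t : ℂ) - z) * ((t : ℂ) - z₀))⁻¹).re ∂μ)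
        = (∫ t : ℝ, (((t : ℂ) - z) * ((t : ℂ) - z₀))⁻¹ ∂μ).re from integral_re hPint, IP]
    rfl
  -- the nonnegative function
  set f : ℝ → ℝ := fun t => (normSq ((t : ℂ) - z))⁻¹ + (normSq ((t : ℂ) - z₀))⁻¹
      - 2 * ((((t : ℂ) - z) * ((t : ℂ) - z₀))⁻¹).re with hf
  have hfeq : ∀ t : ℝ, f t = normSq (((t : ℂ) - z)⁻¹ - ((t : ℂ) - (starRingEnd ℂ) z₀)⁻¹) := by
    intro t
    rw [Complex.normSq_sub, hf]
    have h1 : normSq (((t : ℂ) - z)⁻¹) = (normSq ((t : ℂ) - z))⁻¹ := map_inv₀ normSq _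
    have h2 : normSq (((t : ℂ) - (starRingEnd ℂ) z₀)⁻¹) = (normSq ((t : ℂ) - z₀))⁻¹ := by
      rw [map_inv₀, aux_conj_sub, normSq_conj]
    have h3 : ((t : ℂ) - z)⁻¹ * (starRingEnd ℂ) (((t : ℂ) - (starRingEnd ℂ) z₀)⁻¹)
        = (((t : ℂ) - z) * ((t : ℂ) - z₀))⁻¹ := by
      rw [map_inv₀, aux_conj_sub, Complex.conj_conj, mul_inv]
    rw [h1, h2, h3]
  have hfpos : ∀ t : ℝ, 0 < f t := by
    intro t
    rw [hfeq t]
    refine normSq_pos.2 (sub_ne_zero.2 fun hEq => ?_)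
    have h4 := inv_injective hEq
    have hzz : z = (starRingEnd ℂ) z₀ := by linear_combination -h4
    have : z.im = -z₀.im := by rw [hzz]; simp
    linarith [hz, hz₀, this]
  -- integral of f is zero
  have hint1 := aux_integrable_normSq_inv μ z hz.ne'
  have hint0 := aux_integrable_normSq_inv μ z₀ hz₀.ne'
  have hintre : Integrable (fun t : ℝ => ((((t : ℂ) - z) * ((t : ℂ) - z₀))⁻¹).re) μ :=
    hPint.re
  have hfint : Integrable f μ := by
    rw [hf]
    exact (hint1.add hint0).sub (hintre.const_mul 2)
  have hfzero : ∫ t, f t ∂μ = 0 := by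
    have hint10 : Integrable (fun t : ℝ => (normSq ((t : ℂ) - z))⁻¹
        + (normSq ((t : ℂ) - z₀))⁻¹) μ := hint1.add hint0
    have hint2 : Integrable (fun t : ℝ =>
        2 * ((((t : ℂ) - z) * ((t : ℂ) - z₀))⁻¹).re) μ := hintre.const_mul 2
    simp only [hf]
    rw [integral_sub hint10 hint2, integral_add hint1 hint0, integral_const_mul, I1, I0, IPre]
    norm_num
  exact aux_contra a μ z₀ hz₀ hzero (aux_mu_zero μ f hfint hfpos hfzero)

lemma aux_integrable_sq_inv (μ : Measure ℝ) [IsFiniteMeasure μ] (z : ℂ) (hz : z.im ≠ 0) :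
    Integrable (fun t : ℝ => (((t : ℂ) - z) ^ 2)⁻¹) μ := by
  have : ∀ t : ℝ, (((t : ℂ) - z) ^ 2)⁻¹ = ((t : ℂ) - z)⁻¹ * ((t : ℂ) - z)⁻¹ := by
    intro t; rw [← mul_inv, sq]
  simp only [this]
  simpa using aux_integrable_prod_inv μ z z hz hz

lemma aux_hasDerivAt (μ : Measure ℝ) [IsFiniteMeasure μ] (z₀ : ℂ) (hz₀ : 0 < z₀.im) :
    HasDerivAt (fun w : ℂ => ∫ t : ℝ, ((t : ℂ) - w)⁻¹ ∂μ)
      (∫ t : ℝ, (((t : ℂ) - z₀) ^ 2)⁻¹ ∂μ) z₀ := by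
  set ε : ℝ := z₀.im / 2 with hε
  have hεpos : 0 < ε := by positivity
  have him : ∀ x ∈ Metric.ball z₀ ε, ε ≤ x.im := by
    intro x hx
    have h1 : |(x - z₀).im| ≤ ‖x - z₀‖ := by
      simpa using Complex.abs_im_le_norm (x - z₀)
    have h2 : ‖x - z₀‖ < ε := by simpa [Metric.mem_ball, dist_eq_norm] using hx
    have h3 : |x.im - z₀.im| < ε := by
      simpa [Complex.sub_im] using lt_of_le_of_lt h1 h2
    have := abs_lt.1 h3
    simp only [hε] at *
    linarith [this.1]
  have key := hasDerivAt_integral_of_dominated_loc_of_deriv_le (μ := μ)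
    (F := fun (w : ℂ) (t : ℝ) => ((t : ℂ) - w)⁻¹)
    (F' := fun (w : ℂ) (t : ℝ) => (((t : ℂ) - w) ^ 2)⁻¹)
    (x₀ := z₀) (bound := fun _ => (ε ^ 2)⁻¹) (Metric.ball_mem_nhds z₀ hεpos)
    ?_ (aux_integrable_inv μ z₀ hz₀.ne') ?_ ?_ (integrable_const _) ?_
  · exact key.2
  · filter_upwards [Metric.ball_mem_nhds z₀ hεpos] with x hx
    exact (aux_cont_inv x (lt_of_lt_of_le hεpos (him x hx)).ne').aestronglyMeasurable
  · exact ((Complex.continuous_ofReal.sub continuous_const).pow 2).inv₀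
      (fun t => pow_ne_zero 2 (aux_sub_ne z₀ hz₀.ne' t)) |>.aestronglyMeasurable
  · refine Filter.Eventually.of_forall fun t => fun x hx => ?_
    have hxim : ε ≤ x.im := him x hx
    have h1 : ε ≤ ‖(t : ℂ) - x‖ := by
      have := aux_norm_ge x t
      have : |x.im| ≤ ‖(t : ℂ) - x‖ := this
      have h2 : ε ≤ |x.im| := le_trans hxim (le_abs_self _)
      linarith
    rw [norm_inv, norm_pow]
    have : ε ^ 2 ≤ ‖(t : ℂ) - x‖ ^ 2 := by
      apply pow_le_pow_left₀ hεpos.le h1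
    exact inv_anti₀ (by positivity) this
  · refine Filter.Eventually.of_forall fun t => fun x hx => ?_
    have hne : (t : ℂ) - x ≠ 0 :=
      aux_sub_ne x (lt_of_lt_of_le hεpos (him x hx)).ne' t
    have hd : HasDerivAt (fun w : ℂ => (t : ℂ) - w) (-1) x := by
      simpa using (hasDerivAt_id x).const_sub (t : ℂ)
    have := hd.inv hne
    simp at this
    exact this

lemma aux_sq_id (u : ℂ) :
    ((4 : ℂ) * (u.im : ℂ) ^ 2) = 2 * (normSq u : ℂ) - u ^ 2 - ((starRingEnd ℂ) u) ^ 2 := by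
  apply Complex.ext <;>
    simp [Complex.normSq_apply, pow_two, Complex.mul_re, Complex.mul_im] <;> ring

lemma aux_simple (a : ℝ) (μ : Measure ℝ) [IsFiniteMeasure μ] (z₀ : ℂ) (hz₀ : 0 < z₀.im)
    (hzero : (a : ℂ) - z₀ + ∫ t : ℝ, ((t : ℂ) - z₀)⁻¹ ∂μ = 0)
    (hJ : ∫ t : ℝ, (((t : ℂ) - z₀) ^ 2)⁻¹ ∂μ = 1) : False := by
  have hc₀ : ((starRingEnd ℂ) z₀).im ≠ 0 := by simp [hz₀.ne']
  have I0 : ∫ t : ℝ, (normSq ((t : ℂ) - z₀))⁻¹ ∂μ = 1 := aux_normSq_one a μ z₀ hz₀.ne' hzero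
  have hint0 := aux_integrable_normSq_inv μ z₀ hz₀.ne'
  have hJint := aux_integrable_sq_inv μ z₀ hz₀.ne'
  have hJint' := aux_integrable_sq_inv μ ((starRingEnd ℂ) z₀) hc₀
  have hconj : ∀ t : ℝ, (((t : ℂ) - (starRingEnd ℂ) z₀) ^ 2)⁻¹
      = (starRingEnd ℂ) ((((t : ℂ) - z₀) ^ 2)⁻¹) := by
    intro t
    rw [aux_conj_sub, map_inv₀, map_pow]
  have hJ' : ∫ t : ℝ, (((t : ℂ) - (starRingEnd ℂ) z₀) ^ 2)⁻¹ ∂μ = 1 := by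
    simp only [hconj]
    rw [integral_conj, hJ, map_one]
  -- the positive real function
  set q : ℝ → ℝ := fun t => 4 * ((((t : ℂ) - z₀)⁻¹).im) ^ 2 with hq
  have hqpos : ∀ t, 0 < q t := by
    intro t
    have h1 : (((t : ℂ) - z₀)⁻¹).im ≠ 0 := by
      rw [aux_im_inv]
      exact mul_ne_zero hz₀.ne' (inv_ne_zero (normSq_pos.2 (aux_sub_ne z₀ hz₀.ne' t)).ne')
    have := pow_pos (abs_pos.2 h1) 2
    rw [hq]
    nlinarith [_root_.sq_abs ((((t : ℂ) - z₀)⁻¹).im)]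
  have hqint : Integrable q μ := by
    refine aux_integrable_bdd μ q ?_ (4 * (|z₀.im|⁻¹) ^ 2) fun t => ?_
    · exact (continuous_const.mul (((Complex.continuous_im.comp
        (aux_cont_inv z₀ hz₀.ne'))).pow 2))
    · have h1 : |(((t : ℂ) - z₀)⁻¹).im| ≤ ‖((t : ℂ) - z₀)⁻¹‖ := by
        simpa using Complex.abs_im_le_norm (((t : ℂ) - z₀)⁻¹)
      have h2 : ‖((t : ℂ) - z₀)⁻¹‖ ≤ |z₀.im|⁻¹ := by
        rw [norm_inv]
        exact inv_anti₀ (abs_pos.2 hz₀.ne') (aux_norm_ge z₀ t)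
      have h3 : (((t : ℂ) - z₀)⁻¹).im ^ 2 ≤ (|z₀.im|⁻¹) ^ 2 := by
        calc (((t : ℂ) - z₀)⁻¹).im ^ 2 = |(((t : ℂ) - z₀)⁻¹).im| ^ 2 := (_root_.sq_abs _).symm
          _ ≤ (|z₀.im|⁻¹) ^ 2 := by
              apply pow_le_pow_left₀ (abs_nonneg _) (h1.trans h2)
      rw [Real.norm_eq_abs, _root_.abs_of_nonneg (le_of_lt (hqpos t))]
      rw [hq]
      nlinarith
  -- pointwise complex identity
  have hptc : ∀ t : ℝ, ((q t : ℝ) : ℂ)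
      = 2 * ((normSq ((t : ℂ) - z₀))⁻¹ : ℝ) - (((t : ℂ) - z₀) ^ 2)⁻¹
        - (((t : ℂ) - (starRingEnd ℂ) z₀) ^ 2)⁻¹ := by
    intro t
    have := aux_sq_id (((t : ℂ) - z₀)⁻¹)
    rw [hq]
    push_cast
    rw [this]
    congr 1
    · congr 1
      · rw [map_inv₀]; push_cast; ring
      · rw [inv_pow]
    · rw [aux_conj_sub, map_inv₀, inv_pow]
  -- integrate
  have hInt2 : ∫ t : ℝ, ((q t : ℝ) : ℂ) ∂μ = 0 := by
    have e1 : Integrable (fun t : ℝ => 2 * (((normSq ((t : ℂ) - z₀))⁻¹ : ℝ) : ℂ)) μ :=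
      ((hint0.ofReal (𝕜 := ℂ)).const_mul 2)
    have e2 : Integrable (fun t : ℝ => 2 * (((normSq ((t : ℂ) - z₀))⁻¹ : ℝ) : ℂ)
        - (((t : ℂ) - z₀) ^ 2)⁻¹) μ := e1.sub hJint
    simp only [hptc]
    rw [integral_sub e2 hJint', integral_sub e1 hJint, integral_const_mul, hJ, hJ']
    rw [show (∫ t : ℝ, (((normSq ((t : ℂ) - z₀))⁻¹ : ℝ) : ℂ) ∂μ)
        = (((∫ t : ℝ, (normSq ((t : ℂ) - z₀))⁻¹ ∂μ : ℝ)) : ℂ) from integral_ofReal, I0]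
    norm_num
  have hq0 : ∫ t, q t ∂μ = 0 := by
    have := hInt2
    rw [show (∫ t : ℝ, ((q t : ℝ) : ℂ) ∂μ) = (((∫ t : ℝ, q t ∂μ : ℝ)) : ℂ)
      from integral_ofReal] at this
    exact_mod_cast this
  exact aux_contra a μ z₀ hz₀ hzero (aux_mu_zero μ q hqint hqpos hq0)

/-- If `Q(z) = a - z + μ̂(z)` has a zero `z₀` in the open upper half-plane, then `conj z₀` is
also a zero, `z₀` is the only zero in the open upper half-plane, and it is simple. -/
theorem stmt_15 (a : ℝ) (μ : Measure ℝ) [IsFiniteMeasure μ]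
    (z₀ : ℂ) (hz₀ : 0 < z₀.im)
    (hzero : (a : ℂ) - z₀ + ∫ t : ℝ, ((t : ℂ) - z₀)⁻¹ ∂μ = 0) :
    ((a : ℂ) - (starRingEnd ℂ) z₀ +
        ∫ t : ℝ, ((t : ℂ) - (starRingEnd ℂ) z₀)⁻¹ ∂μ = 0) ∧
    (∀ z : ℂ, 0 < z.im → (a : ℂ) - z + (∫ t : ℝ, ((t : ℂ) - z)⁻¹ ∂μ) = 0 → z = z₀) ∧
    deriv (fun z : ℂ => (a : ℂ) - z + ∫ t : ℝ, ((t : ℂ) - z)⁻¹ ∂μ) z₀ ≠ 0 := by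
  refine ⟨?_, ?_, ?_⟩
  · have h := congrArg (starRingEnd ℂ) hzero
    rw [map_add, map_sub, map_zero] at h
    simp only [aux_conj_sub, ← map_inv₀]
    rw [integral_conj]
    simpa [Complex.conj_ofReal] using h
  · intro z hz hq
    by_contra hne
    exact aux_unique a μ z₀ hz₀ hzero z hz hq hne
  · have h1 : HasDerivAt (fun z : ℂ => (a : ℂ) - z) (-1) z₀ := by
      simpa using (hasDerivAt_id z₀).const_sub (a : ℂ)
    have hD : HasDerivAt (fun z : ℂ => (a : ℂ) - z + ∫ t : ℝ, ((t : ℂ) - z)⁻¹ ∂μ) _ z₀ :=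
      h1.add (aux_hasDerivAt μ z₀ hz₀)
    rw [hD.deriv]
    intro h0
    have hJ : ∫ t : ℝ, (((t : ℂ) - z₀) ^ 2)⁻¹ ∂μ = 1 := by linear_combination h0
    exact aux_simple a μ z₀ hz₀ hzero hJ
end
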